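/- arXiv:0903.3685 — 2 statements merged into one kernel-verified Lean document; each statement's English description precedes it below -/
import Mathlib

section
/- The triangular lattice Δ has exactly 14 proper perfect dominating sets: the collection {S ⊆ ℤ × ℤ : S is a proper PDS of Δ} has precisely 14 members. -/
open SimpleGraph Set

def triDirs : Set (ℤ × ℤ) := {(1,0), (-1,0), (0,1), (0,-1), (1,-1), (-1,1)}

def triLattice : SimpleGraph (ℤ × ℤ) :=
  SimpleGraph.fromRel (fun u v => u - v ∈ triDirs)

def torLattice (m n : ℕ) : SimpleGraph (ZMod m × ZMod n) :=
  SimpleGraph.fromRel (fun u v =>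
    ∃ d ∈ triDirs, u - v = ((d.1 : ZMod m), (d.2 : ZMod n)))

def IsPDS {V : Type*} (G : SimpleGraph V) (S : Set V) : Prop :=
  ∀ v ∉ S, ∃! u, u ∈ S ∧ G.Adj v u

def IsSPDS {V : Type*} (G : SimpleGraph V) (S : Set V) : Prop :=
  ∀ v ∉ S, {u | u ∈ S ∧ G.Adj v u}.ncard = 2

def IsQPDS {V : Type*} (G : SimpleGraph V) (S : Set V) : Prop :=
  ∀ v ∉ S, {u | u ∈ S ∧ G.Adj v u}.ncard = 1 ∨ {u | u ∈ S ∧ G.Adj v u}.ncard = 2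

def IsK2QPDS {V : Type*} (G : SimpleGraph V) (S : Set V) : Prop :=
  IsQPDS G S ∧ ∀ v ∈ S, {u | u ∈ S ∧ G.Adj v u}.ncard = 1

def IsK3QPDS {V : Type*} (G : SimpleGraph V) (S : Set V) : Prop :=
  IsQPDS G S ∧ ∀ v ∈ S, ∃ a b, a ≠ b ∧ G.Adj a b ∧ {u | u ∈ S ∧ G.Adj v u} = {a, b}

def IsIndep {V : Type*} (G : SimpleGraph V) (S : Set V) : Prop :=
  ∀ a ∈ S, ∀ b ∈ S, ¬ G.Adj a b

lemma mem_triDirs {d : ℤ × ℤ} : d ∈ triDirs ↔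
    d = (1,0) ∨ d = (-1,0) ∨ d = (0,1) ∨ d = (0,-1) ∨ d = (1,-1) ∨ d = (-1,1) := by
  simp [triDirs]
lemma triDirs_neg {d : ℤ × ℤ} (h : d ∈ triDirs) : -d ∈ triDirs := by
  rcases mem_triDirs.1 h with h|h|h|h|h|h <;> subst h <;> simp [mem_triDirs]
lemma adj_iff {u v : ℤ × ℤ} : triLattice.Adj u v ↔ u ≠ v ∧ u - v ∈ triDirs := by
  constructor
  · rintro ⟨hne, h | h⟩
    · exact ⟨hne, h⟩
    · exact ⟨hne, by simpa using triDirs_neg h⟩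
  · rintro ⟨hne, h⟩
    exact ⟨hne, Or.inl h⟩
lemma zero_not_mem_triDirs : ((0:ℤ×ℤ)) ∉ triDirs := by rw [mem_triDirs]; decide
lemma adj_of_sub {u v : ℤ × ℤ} (h : u - v ∈ triDirs) : triLattice.Adj u v :=
  adj_iff.2 ⟨fun he => zero_not_mem_triDirs (by rwa [he, sub_self] at h), h⟩
lemma adj_off (c : ℤ × ℤ) {o₁ o₂ : ℤ × ℤ} (h : o₁ - o₂ ∈ triDirs) :
    triLattice.Adj (c + o₁) (c + o₂) := adj_of_sub (by rwa [add_sub_add_left_eq_sub])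

section
variable {S : Set (ℤ × ℤ)}

lemma tri_fill (hS : IsPDS triLattice S) {a b w : ℤ × ℤ} (ha : a ∈ S) (hb : b ∈ S)
    (hab : triLattice.Adj a b) (hwa : triLattice.Adj w a) (hwb : triLattice.Adj w b) :
    w ∈ S := by
  by_contra hw
  obtain ⟨u, _, huniq⟩ := hS w hw
  exact hab.ne ((huniq a ⟨ha, hwa⟩).trans (huniq b ⟨hb, hwb⟩).symm)

def Hedge (S : Set (ℤ × ℤ)) (u : ℤ × ℤ) : Prop := u ∈ S ∧ u + (1,0) ∈ S

lemma hedge_step (hS : IsPDS triLattice S) {u : ℤ × ℤ} (h : Hedge S u) :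
    Hedge S (u + (1,0)) ∧ Hedge S (u + (-1,0)) ∧ Hedge S (u + (0,1)) ∧ Hedge S (u + (0,-1)) := by
  obtain ⟨h0, h1⟩ := h
  have e0 : triLattice.Adj u (u + (1,0)) := by
    have := adj_off u (o₁ := (0,0)) (o₂ := (1,0)) (by rw [mem_triDirs]; decide)
    simpa [Prod.mk_zero_zero] using this
  have hA : u + (0,1) ∈ S :=
    tri_fill hS h0 h1 e0 (by simpa [Prod.mk_zero_zero] using adj_off u (o₁ := (0,1)) (o₂ := (0,0)) (by rw [mem_triDirs]; decide))
      (adj_off u (o₁ := (0,1)) (o₂ := (1,0)) (by rw [mem_triDirs]; decide))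
  have hB : u + (1,-1) ∈ S :=
    tri_fill hS h0 h1 e0 (by simpa [Prod.mk_zero_zero] using adj_off u (o₁ := (1,-1)) (o₂ := (0,0)) (by rw [mem_triDirs]; decide))
      (adj_off u (o₁ := (1,-1)) (o₂ := (1,0)) (by rw [mem_triDirs]; decide))
  have hC : u + (1,1) ∈ S :=
    tri_fill hS hA h1 (adj_off u (o₁ := (0,1)) (o₂ := (1,0)) (by rw [mem_triDirs]; decide))
      (adj_off u (o₁ := (1,1)) (o₂ := (0,1)) (by rw [mem_triDirs]; decide))
      (adj_off u (o₁ := (1,1)) (o₂ := (1,0)) (by rw [mem_triDirs]; decide))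
  have hD : u + (0,-1) ∈ S :=
    tri_fill hS h0 hB (by simpa [Prod.mk_zero_zero] using adj_off u (o₁ := (0,0)) (o₂ := (1,-1)) (by rw [mem_triDirs]; decide))
      (by simpa [Prod.mk_zero_zero] using adj_off u (o₁ := (0,-1)) (o₂ := (0,0)) (by rw [mem_triDirs]; decide))
      (adj_off u (o₁ := (0,-1)) (o₂ := (1,-1)) (by rw [mem_triDirs]; decide))
  have hE : u + (2,0) ∈ S :=
    tri_fill hS h1 hC (adj_off u (o₁ := (1,0)) (o₂ := (1,1)) (by rw [mem_triDirs]; decide))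
      (adj_off u (o₁ := (2,0)) (o₂ := (1,0)) (by rw [mem_triDirs]; decide))
      (adj_off u (o₁ := (2,0)) (o₂ := (1,1)) (by rw [mem_triDirs]; decide))
  have hF : u + (-1,0) ∈ S :=
    tri_fill hS h0 hD (by simpa [Prod.mk_zero_zero] using adj_off u (o₁ := (0,0)) (o₂ := (0,-1)) (by rw [mem_triDirs]; decide))
      (by simpa [Prod.mk_zero_zero] using adj_off u (o₁ := (-1,0)) (o₂ := (0,0)) (by rw [mem_triDirs]; decide))
      (adj_off u (o₁ := (-1,0)) (o₂ := (0,-1)) (by rw [mem_triDirs]; decide))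
  refine ⟨⟨h1, ?_⟩, ⟨hF, ?_⟩, ⟨hA, ?_⟩, ⟨hD, ?_⟩⟩
  · rw [add_assoc]; exact (by norm_num [Prod.ext_iff] : ((1,0):ℤ×ℤ) + (1,0) = (2,0)) ▸ hE
  · rw [add_assoc]; exact (by norm_num [Prod.ext_iff] : ((-1,0):ℤ×ℤ) + (1,0) = (0,0)) ▸ (by simpa [Prod.mk_zero_zero] using h0)
  · rw [add_assoc]; exact (by norm_num [Prod.ext_iff] : ((0,1):ℤ×ℤ) + (1,0) = (1,1)) ▸ hC
  · rw [add_assoc]; exact (by norm_num [Prod.ext_iff] : ((0,-1):ℤ×ℤ) + (1,0) = (1,-1)) ▸ hB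

lemma no_edge (hS : IsPDS triLattice S) (hne : S ≠ Set.univ) :
    ∀ a ∈ S, ∀ b ∈ S, ¬ triLattice.Adj a b := by
  intro a ha b hb hadj
  apply hne
  rw [adj_iff] at hadj
  obtain ⟨hne', hd⟩ := hadj
  -- produce a horizontal edge
  have key : ∃ u, Hedge S u := by
    have hba : ∀ (x : ℤ × ℤ) (d : ℤ × ℤ), a - b = d → a = b + d := by
      intro x d h; rw [← h]; abel
    rcases mem_triDirs.1 hd with h|h|h|h|h|h
    · exact ⟨b, hb, by rw [← hba a _ h]; exact ha⟩
    · refine ⟨a, ha, ?_⟩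
      have : b = a + (1,0) := by
        have : a - b = (-1,0) := h
        have := congrArg (fun z => b + z - (a - b) + (-1,0)) this
        rw [show b = a - (-1,0) from by rw [← h]; abel]
        norm_num [Prod.ext_iff]
      rw [← this]; exact hb
    · -- a = b + (0,1); fill w = b + (1,0)
      have hab : a = b + (0,1) := by rw [← h]; abel
      subst hab
      refine ⟨b, hb, ?_⟩
      exact tri_fill hS hb (show b + (0,1) ∈ S from ha)
        (by simpa [Prod.mk_zero_zero] using adj_off b (o₁ := (0,0)) (o₂ := (0,1)) (by rw [mem_triDirs]; decide))
        (by simpa [Prod.mk_zero_zero] using adj_off b (o₁ := (1,0)) (o₂ := (0,0)) (by rw [mem_triDirs]; decide))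
        (adj_off b (o₁ := (1,0)) (o₂ := (0,1)) (by rw [mem_triDirs]; decide))
    · have hab : b = a + (0,1) := by
        rw [show a + (0,1) = a - (0,-1) from by norm_num [Prod.ext_iff], ← h]; abel
      subst hab
      refine ⟨a, ha, ?_⟩
      exact tri_fill hS ha hb
        (by simpa [Prod.mk_zero_zero] using adj_off a (o₁ := (0,0)) (o₂ := (0,1)) (by rw [mem_triDirs]; decide))
        (by simpa [Prod.mk_zero_zero] using adj_off a (o₁ := (1,0)) (o₂ := (0,0)) (by rw [mem_triDirs]; decide))
        (adj_off a (o₁ := (1,0)) (o₂ := (0,1)) (by rw [mem_triDirs]; decide))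
    · have hab : a = b + (1,-1) := by rw [← h]; abel
      subst hab
      refine ⟨b, hb, ?_⟩
      exact tri_fill hS hb ha
        (by simpa [Prod.mk_zero_zero] using adj_off b (o₁ := (0,0)) (o₂ := (1,-1)) (by rw [mem_triDirs]; decide))
        (by simpa [Prod.mk_zero_zero] using adj_off b (o₁ := (1,0)) (o₂ := (0,0)) (by rw [mem_triDirs]; decide))
        (adj_off b (o₁ := (1,0)) (o₂ := (1,-1)) (by rw [mem_triDirs]; decide))
    · have hab : b = a + (1,-1) := by
        rw [show a + (1,-1) = a - (-1,1) from by norm_num [Prod.ext_iff, sub_eq_add_neg], ← h]; abel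
      subst hab
      refine ⟨a, ha, ?_⟩
      exact tri_fill hS ha hb
        (by simpa [Prod.mk_zero_zero] using adj_off a (o₁ := (0,0)) (o₂ := (1,-1)) (by rw [mem_triDirs]; decide))
        (by simpa [Prod.mk_zero_zero] using adj_off a (o₁ := (1,0)) (o₂ := (0,0)) (by rw [mem_triDirs]; decide))
        (adj_off a (o₁ := (1,0)) (o₂ := (1,-1)) (by rw [mem_triDirs]; decide))
  obtain ⟨u₀, hu₀⟩ := key
  have row : ∀ k : ℤ, Hedge S (u₀ + (k, 0)) := by
    intro k
    induction k using Int.induction_on with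
    | zero => simpa [Prod.mk_zero_zero] using hu₀
    | succ n ih =>
        have := (hedge_step hS ih).1
        rw [add_assoc] at this
        convert this using 3 <;> norm_num
    | pred n ih =>
        have := (hedge_step hS ih).2.1
        rw [add_assoc] at this
        convert this using 3 <;> norm_num [sub_eq_add_neg]
  have grid : ∀ k l : ℤ, Hedge S (u₀ + (k, l)) := by
    intro k l
    induction l using Int.induction_on with
    | zero => exact row k
    | succ n ih =>
        have := (hedge_step hS ih).2.2.1
        rw [add_assoc] at this
        convert this using 3 <;> norm_num
    | pred n ih =>
        have := (hedge_step hS ih).2.2.2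
        rw [add_assoc] at this
        convert this using 3 <;> norm_num [sub_eq_add_neg]
  rw [Set.eq_univ_iff_forall]
  intro w
  have := (grid (w.1 - u₀.1) (w.2 - u₀.2)).1
  convert this using 2
  rw [Prod.ext_iff]
  constructor <;> simp
end

def Hlist : List (ℤ × ℤ) := [(0,0),(1,0),(-1,0),(0,1),(0,-1),(1,-1),(-1,1)]
def dirsList : List (ℤ × ℤ) := [(1,0),(-1,0),(0,1),(0,-1),(1,-1),(-1,1)]

def closeBy (δ : ℤ × ℤ) : Prop := ∃ h₁ ∈ Hlist, ∃ h₂ ∈ Hlist, δ = h₁ - h₂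

instance : DecidablePred closeBy := fun δ => by unfold closeBy; infer_instance

lemma mem_Hlist {h : ℤ × ℤ} (hh : h ∈ Hlist) : h = 0 ∨ h ∈ triDirs := by
  fin_cases hh
  · left; rfl
  all_goals (right; rw [mem_triDirs]; decide)

section
variable {S : Set (ℤ × ℤ)}

lemma sep (hS : IsPDS triLattice S) (hind : ∀ a ∈ S, ∀ b ∈ S, ¬ triLattice.Adj a b)
    {a b h₁ h₂ : ℤ × ℤ} (ha : a ∈ S) (hb : b ∈ S)
    (hh₁ : h₁ = 0 ∨ h₁ ∈ triDirs) (hh₂ : h₂ = 0 ∨ h₂ ∈ triDirs)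
    (heq : b + h₁ = a + h₂) : a = b := by
  rcases hh₁ with rfl | hh₁
  · rcases hh₂ with rfl | hh₂
    · simpa using heq.symm
    · refine (hind b hb a ha (adj_of_sub ?_)).elim
      have : b - a = h₂ := by rw [show b = a + h₂ from by simpa using heq]; abel
      rwa [this]
  · rcases hh₂ with rfl | hh₂
    · refine (hind a ha b hb (adj_of_sub ?_)).elim
      have : a - b = h₁ := by rw [show a = b + h₁ from by simpa using heq.symm]; abel
      rwa [this]
    · have hwa : (b + h₁) - a ∈ triDirs := by rw [heq, add_sub_cancel_left]; exact hh₂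
      have hwb : (b + h₁) - b ∈ triDirs := by rw [add_sub_cancel_left]; exact hh₁
      by_cases hw : b + h₁ ∈ S
      · exact ((hind _ hw a ha (adj_of_sub hwa))).elim
      · obtain ⟨u, -, huniq⟩ := hS _ hw
        exact (huniq a ⟨ha, adj_of_sub hwa⟩).trans (huniq b ⟨hb, adj_of_sub hwb⟩).symm

lemma close_eq (hS : IsPDS triLattice S) (hind : ∀ a ∈ S, ∀ b ∈ S, ¬ triLattice.Adj a b)
    {a b : ℤ × ℤ} (ha : a ∈ S) (hb : b ∈ S) (h : closeBy (a - b)) : a = b := by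
  obtain ⟨h₁, hm₁, h₂, hm₂, hd⟩ := h
  refine sep hS hind ha hb (mem_Hlist hm₁) (mem_Hlist hm₂) ?_
  rw [sub_eq_sub_iff_add_eq_add] at hd
  rw [add_comm b h₁, ← hd, add_comm]

lemma not_mem_near (hS : IsPDS triLattice S) (hind : ∀ a ∈ S, ∀ b ∈ S, ¬ triLattice.Adj a b)
    {c m : ℤ × ℤ} (hc : c ∈ S) (h1 : closeBy m) (h2 : m ≠ 0) : c + m ∉ S := fun h =>
  h2 (add_eq_left.mp (close_eq hS hind h hc (by rwa [add_sub_cancel_left])))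

lemma dom_pt {c m u d : ℤ × ℤ} (h : (c + m) - u = d) : u = c + (m - d) := by
  have : u = (c + m) - d := by rw [← h]; abel
  rw [this, add_sub_assoc]

lemma force_round (hS : IsPDS triLattice S) (hind : ∀ a ∈ S, ∀ b ∈ S, ¬ triLattice.Adj a b)
    {c k m r : ℤ × ℤ} (hc : c ∈ S) (hk : c + k ∈ S)
    (h1 : closeBy m) (h2 : m ≠ 0)
    (hcond : ∀ d ∈ dirsList, (m - d = r) ∨ (closeBy (m - d) ∧ m - d ≠ (0:ℤ×ℤ))
      ∨ (closeBy (m - d - k) ∧ m - d ≠ k)) :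
    c + r ∈ S := by
  have hv : c + m ∉ S := not_mem_near hS hind hc h1 h2
  obtain ⟨u, ⟨hu, hadj⟩, -⟩ := hS _ hv
  have hd := (adj_iff.1 hadj).2
  have handle : ∀ d ∈ dirsList, (c + m) - u = d → c + r ∈ S := by
    intro d hdl hdu
    have hu' : u = c + (m - d) := dom_pt hdu
    rw [hu'] at hu
    rcases hcond d hdl with h | ⟨h, h'⟩ | ⟨h, h'⟩
    · rwa [h] at hu
    · exact absurd (add_eq_left.mp
        (close_eq hS hind hu hc (by rwa [add_sub_cancel_left]))) h'
    · have := close_eq hS hind hu hk (by rwa [add_sub_add_left_eq_sub])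
      exact absurd (add_right_injective c this) h'
  rcases mem_triDirs.1 hd with h|h|h|h|h|h
  · exact handle (1,0) (by decide) h
  · exact handle (-1,0) (by decide) h
  · exact handle (0,1) (by decide) h
  · exact handle (0,-1) (by decide) h
  · exact handle (1,-1) (by decide) h
  · exact handle (-1,1) (by decide) h

def M1list : List (ℤ × ℤ) := [(1,2),(-1,-2),(3,-1),(-3,1),(2,-3),(-2,3)]
def M2list : List (ℤ × ℤ) := [(2,1),(-2,-1),(3,-2),(-3,2),(1,-3),(-1,3)]

def chirA (S : Set (ℤ × ℤ)) (c : ℤ × ℤ) : Prop := c ∈ S ∧ ∀ m ∈ M2list, c + m ∈ S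
def chirB (S : Set (ℤ × ℤ)) (c : ℤ × ℤ) : Prop := c ∈ S ∧ ∀ m ∈ M1list, c + m ∈ S

lemma chainA (hS : IsPDS triLattice S) (hind : ∀ a ∈ S, ∀ b ∈ S, ¬ triLattice.Adj a b)
    {c : ℤ × ℤ} (hc : c ∈ S) (h1 : c + ((2,1):ℤ×ℤ) ∈ S) : chirA S c := by
  have p2 : c + ((3,-2):ℤ×ℤ) ∈ S :=
    force_round hS hind (m := (2,-1)) hc h1 (by decide) (by decide) (by decide)
  have p3 : c + ((1,-3):ℤ×ℤ) ∈ S :=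
    force_round hS hind (m := (1,-2)) hc p2 (by decide) (by decide) (by decide)
  have p4 : c + ((-2,-1):ℤ×ℤ) ∈ S :=
    force_round hS hind (m := (-1,-1)) hc p3 (by decide) (by decide) (by decide)
  have p5 : c + ((-3,2):ℤ×ℤ) ∈ S :=
    force_round hS hind (m := (-2,1)) hc p4 (by decide) (by decide) (by decide)
  have p6 : c + ((-1,3):ℤ×ℤ) ∈ S :=
    force_round hS hind (m := (-1,2)) hc p5 (by decide) (by decide) (by decide)
  refine ⟨hc, ?_⟩
  intro m hm
  fin_cases hm <;> assumption

lemma chainB (hS : IsPDS triLattice S) (hind : ∀ a ∈ S, ∀ b ∈ S, ¬ triLattice.Adj a b)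
    {c : ℤ × ℤ} (hc : c ∈ S) (h1 : c + ((1,2):ℤ×ℤ) ∈ S) : chirB S c := by
  have q2 : c + ((-2,3):ℤ×ℤ) ∈ S :=
    force_round hS hind (m := (-1,2)) hc h1 (by decide) (by decide) (by decide)
  have q3 : c + ((-3,1):ℤ×ℤ) ∈ S :=
    force_round hS hind (m := (-2,1)) hc q2 (by decide) (by decide) (by decide)
  have q4 : c + ((-1,-2):ℤ×ℤ) ∈ S :=
    force_round hS hind (m := (-1,-1)) hc q3 (by decide) (by decide) (by decide)
  have q5 : c + ((2,-3):ℤ×ℤ) ∈ S :=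
    force_round hS hind (m := (1,-2)) hc q4 (by decide) (by decide) (by decide)
  have q6 : c + ((3,-1):ℤ×ℤ) ∈ S :=
    force_round hS hind (m := (2,-1)) hc q5 (by decide) (by decide) (by decide)
  refine ⟨hc, ?_⟩
  intro m hm
  fin_cases hm <;> assumption

lemma local_struct (hS : IsPDS triLattice S) (hind : ∀ a ∈ S, ∀ b ∈ S, ¬ triLattice.Adj a b)
    {c : ℤ × ℤ} (hc : c ∈ S) : chirA S c ∨ chirB S c := by
  have hv : c + ((1,1):ℤ×ℤ) ∉ S := not_mem_near hS hind hc (by decide) (by decide)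
  obtain ⟨u, ⟨hu, hadj⟩, -⟩ := hS _ hv
  have hd := (adj_iff.1 hadj).2
  have exc : ∀ o : ℤ×ℤ, closeBy o → o ≠ 0 → c + o ∈ S → False := fun o a b h =>
    not_mem_near hS hind hc a b h
  rcases mem_triDirs.1 hd with h|h|h|h|h|h <;> rw [dom_pt h] at hu
  · exact (exc _ (by decide) (by decide) hu).elim
  · rw [show ((1,1):ℤ×ℤ) - (-1,0) = (2,1) from by decide] at hu
    exact Or.inl (chainA hS hind hc hu)
  · exact (exc _ (by decide) (by decide) hu).elim
  · rw [show ((1,1):ℤ×ℤ) - (0,-1) = (1,2) from by decide] at hu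
    exact Or.inr (chainB hS hind hc hu)
  · exact (exc _ (by decide) (by decide) hu).elim
  · exact (exc _ (by decide) (by decide) hu).elim

lemma stepA (hS : IsPDS triLattice S) (hind : ∀ a ∈ S, ∀ b ∈ S, ¬ triLattice.Adj a b)
    {c g cm : ℤ × ℤ} (hA : chirA S c) (hg : g ∈ M2list) (hconf : cm ∈ M1list)
    (hcb : closeBy (g + cm)) (hne : g + cm ≠ 0) : chirA S (c + g) := by
  rcases local_struct hS hind (hA.2 g hg) with h | h
  · exact h
  · exfalso
    have := h.2 cm hconf
    rw [add_assoc] at this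
    exact not_mem_near hS hind hA.1 hcb hne this

lemma stepB (hS : IsPDS triLattice S) (hind : ∀ a ∈ S, ∀ b ∈ S, ¬ triLattice.Adj a b)
    {c g cm : ℤ × ℤ} (hB : chirB S c) (hg : g ∈ M1list) (hconf : cm ∈ M2list)
    (hcb : closeBy (g + cm)) (hne : g + cm ≠ 0) : chirB S (c + g) := by
  rcases local_struct hS hind (hB.2 g hg) with h | h
  · exfalso
    have := h.2 cm hconf
    rw [add_assoc] at this
    exact not_mem_near hS hind hB.1 hcb hne this
  · exact h

lemma lineA1 (hS : IsPDS triLattice S) (hind : ∀ a ∈ S, ∀ b ∈ S, ¬ triLattice.Adj a b)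
    (a : ℤ) {x : ℤ × ℤ} (hx : chirA S x) : chirA S (x + (2*a, a)) := by
  induction a using Int.induction_on with
  | zero => simpa [Prod.mk_zero_zero] using hx
  | succ n ih =>
      have := stepA hS hind (g := (2,1)) (cm := (-1,-2)) ih (by decide) (by decide)
        (by decide) (by decide)
      rw [add_assoc] at this
      convert this using 3 <;> simp [Prod.fst_add, Prod.snd_add] <;> push_cast <;> ring
  | pred n ih =>
      have := stepA hS hind (g := (-2,-1)) (cm := (1,2)) ih (by decide) (by decide)
        (by decide) (by decide)
      rw [add_assoc] at this
      convert this using 3 <;> simp [Prod.fst_add, Prod.snd_add] <;> push_cast <;> ring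

lemma lineA2 (hS : IsPDS triLattice S) (hind : ∀ a ∈ S, ∀ b ∈ S, ¬ triLattice.Adj a b)
    (b : ℤ) {x : ℤ × ℤ} (hx : chirA S x) : chirA S (x + (3*b, -2*b)) := by
  induction b using Int.induction_on with
  | zero => simpa [Prod.mk_zero_zero] using hx
  | succ n ih =>
      have := stepA hS hind (g := (3,-2)) (cm := (-3,1)) ih (by decide) (by decide)
        (by decide) (by decide)
      rw [add_assoc] at this
      convert this using 3 <;> simp [Prod.fst_add, Prod.snd_add] <;> push_cast <;> ring
  | pred n ih =>
      have := stepA hS hind (g := (-3,2)) (cm := (3,-1)) ih (by decide) (by decide)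
        (by decide) (by decide)
      rw [add_assoc] at this
      convert this using 3 <;> simp [Prod.fst_add, Prod.snd_add] <;> push_cast <;> ring

lemma lineB1 (hS : IsPDS triLattice S) (hind : ∀ a ∈ S, ∀ b ∈ S, ¬ triLattice.Adj a b)
    (a : ℤ) {x : ℤ × ℤ} (hx : chirB S x) : chirB S (x + (a, 2*a)) := by
  induction a using Int.induction_on with
  | zero => simpa [Prod.mk_zero_zero] using hx
  | succ n ih =>
      have := stepB hS hind (g := (1,2)) (cm := (-2,-1)) ih (by decide) (by decide)
        (by decide) (by decide)
      rw [add_assoc] at this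
      convert this using 3 <;> simp [Prod.fst_add, Prod.snd_add] <;> push_cast <;> ring
  | pred n ih =>
      have := stepB hS hind (g := (-1,-2)) (cm := (2,1)) ih (by decide) (by decide)
        (by decide) (by decide)
      rw [add_assoc] at this
      convert this using 3 <;> simp [Prod.fst_add, Prod.snd_add] <;> push_cast <;> ring

lemma lineB2 (hS : IsPDS triLattice S) (hind : ∀ a ∈ S, ∀ b ∈ S, ¬ triLattice.Adj a b)
    (b : ℤ) {x : ℤ × ℤ} (hx : chirB S x) : chirB S (x + (3*b, -b)) := by
  induction b using Int.induction_on with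
  | zero => simpa [Prod.mk_zero_zero] using hx
  | succ n ih =>
      have := stepB hS hind (g := (3,-1)) (cm := (-3,2)) ih (by decide) (by decide)
        (by decide) (by decide)
      rw [add_assoc] at this
      convert this using 3 <;> simp [Prod.fst_add, Prod.snd_add] <;> push_cast <;> ring
  | pred n ih =>
      have := stepB hS hind (g := (-3,1)) (cm := (3,-2)) ih (by decide) (by decide)
        (by decide) (by decide)
      rw [add_assoc] at this
      convert this using 3 <;> simp [Prod.fst_add, Prod.snd_add] <;> push_cast <;> ring
end

/-- weight function -/
def fw (k : ℤ) (v : ℤ × ℤ) : ZMod 7 := (v.1 : ZMod 7) + (k : ZMod 7) * (v.2 : ZMod 7)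

def latt (k : ℤ) (c : ZMod 7) : Set (ℤ × ℤ) := {v | fw k v = c}

lemma fw_sub (k : ℤ) (u v : ℤ × ℤ) : fw k (u - v) = fw k u - fw k v := by
  simp only [fw, Prod.fst_sub, Prod.snd_sub]
  push_cast
  ring

lemma fw_inj (k : ℤ) (hk : k = 3 ∨ k = 5) {e₁ e₂ : ℤ × ℤ} (h₁ : e₁ ∈ triDirs)
    (h₂ : e₂ ∈ triDirs) (h : fw k e₁ = fw k e₂) : e₁ = e₂ := by
  rcases hk with hk | hk <;> subst hk <;>
  rcases mem_triDirs.1 h₁ with h₁|h₁|h₁|h₁|h₁|h₁ <;>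
  rcases mem_triDirs.1 h₂ with h₂|h₂|h₂|h₂|h₂|h₂ <;>
  subst h₁ <;> subst h₂ <;> first | rfl | (exfalso; revert h; decide)

lemma fw_surj (k : ℤ) (hk : k = 3 ∨ k = 5) {z : ZMod 7} (hz : z ≠ 0) :
    ∃ e ∈ triDirs, fw k e = z := by
  have h7 : z = 1 ∨ z = 2 ∨ z = 3 ∨ z = 4 ∨ z = 5 ∨ z = 6 :=
    (by decide : ∀ w : ZMod 7, w ≠ 0 → w = 1 ∨ w = 2 ∨ w = 3 ∨ w = 4 ∨ w = 5 ∨ w = 6) z hz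
  rcases hk with hk | hk <;> subst hk <;> rcases h7 with h|h|h|h|h|h <;> subst h
  · exact ⟨(1,0), by simp [mem_triDirs], by decide⟩
  · exact ⟨(-1,1), by simp [mem_triDirs], by decide⟩
  · exact ⟨(0,1), by simp [mem_triDirs], by decide⟩
  · exact ⟨(0,-1), by simp [mem_triDirs], by decide⟩
  · exact ⟨(1,-1), by simp [mem_triDirs], by decide⟩
  · exact ⟨(-1,0), by simp [mem_triDirs], by decide⟩
  · exact ⟨(1,0), by simp [mem_triDirs], by decide⟩
  · exact ⟨(0,-1), by simp [mem_triDirs], by decide⟩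
  · exact ⟨(1,-1), by simp [mem_triDirs], by decide⟩
  · exact ⟨(-1,1), by simp [mem_triDirs], by decide⟩
  · exact ⟨(0,1), by simp [mem_triDirs], by decide⟩
  · exact ⟨(-1,0), by simp [mem_triDirs], by decide⟩

lemma latt_isPDS (k : ℤ) (hk : k = 3 ∨ k = 5) (c : ZMod 7) : IsPDS triLattice (latt k c) := by
  intro v hv
  have hvc : fw k v ≠ c := hv
  obtain ⟨e, he, hfe⟩ := fw_surj k hk (z := fw k v - c) (by
    intro h; apply hvc; have := sub_eq_zero.mp h; exact this)
  refine ⟨v - e, ⟨?_, ?_⟩, ?_⟩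
  · show fw k (v - e) = c
    rw [fw_sub, hfe]; ring
  · rw [adj_iff]
    constructor
    · intro h
      have he0 : e = 0 := sub_eq_self.mp h.symm
      rw [he0] at he
      have h0 : ((0:ℤ×ℤ)) ∉ triDirs := by rw [mem_triDirs]; decide
      exact h0 he
    · simpa using he
  · rintro u ⟨huS, hadj⟩
    rw [adj_iff] at hadj
    obtain ⟨hne, hd⟩ := hadj
    have : fw k (v - u) = fw k v - c := by
      rw [fw_sub, huS]
    have := fw_inj k hk hd he (by rw [this, hfe])
    have : u = v - e := by rw [← this]; abel
    exact this

section Glob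
variable {S : Set (ℤ × ℤ)}

lemma globA (hS : IsPDS triLattice S) (hind : ∀ a ∈ S, ∀ b ∈ S, ¬ triLattice.Adj a b)
    {c₀ : ℤ × ℤ} (hA : chirA S c₀) : S = latt 5 (fw 5 c₀) := by
  have hsub : latt 5 (fw 5 c₀) ⊆ S := by
    intro v hv
    have h0 : fw 5 (v - c₀) = 0 := by
      rw [fw_sub, show fw 5 v = fw 5 c₀ from hv, sub_self]
    have hdvd : (7:ℤ) ∣ (v.1 - c₀.1) + 5*(v.2 - c₀.2) := by
      have h1 : (((v.1 - c₀.1) + 5*(v.2 - c₀.2) : ℤ) : ZMod 7) = 0 := by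
        unfold fw at h0
        rw [Prod.fst_sub, Prod.snd_sub] at h0
        push_cast at h0 ⊢
        linear_combination h0
      exact (ZMod.intCast_zmod_eq_zero_iff_dvd _ 7).mp h1
    obtain ⟨a, b, ha, hb⟩ : ∃ a b : ℤ, v.1 = c₀.1 + (2*a + 3*b) ∧ v.2 = c₀.2 + (a - 2*b) :=
      ⟨(2*(v.1-c₀.1)+3*(v.2-c₀.2))/7, ((v.1-c₀.1)-2*(v.2-c₀.2))/7, by omega, by omega⟩
    have hch := lineA2 hS hind b (lineA1 hS hind a hA)
    have hveq : v = c₀ + (2*a, a) + (3*b, -2*b) := by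
      rw [Prod.ext_iff]
      constructor <;> simp [Prod.fst_add, Prod.snd_add] <;> omega
    rw [← hveq] at hch
    exact hch.1
  refine Set.Subset.antisymm ?_ hsub
  intro s hs
  by_contra hns
  obtain ⟨u, ⟨hu, hadj⟩, -⟩ := latt_isPDS 5 (Or.inr rfl) (fw 5 c₀) s hns
  exact hind s hs u (hsub hu) hadj

lemma globB (hS : IsPDS triLattice S) (hind : ∀ a ∈ S, ∀ b ∈ S, ¬ triLattice.Adj a b)
    {c₀ : ℤ × ℤ} (hB : chirB S c₀) : S = latt 3 (fw 3 c₀) := by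
  have hsub : latt 3 (fw 3 c₀) ⊆ S := by
    intro v hv
    have h0 : fw 3 (v - c₀) = 0 := by
      rw [fw_sub, show fw 3 v = fw 3 c₀ from hv, sub_self]
    have hdvd : (7:ℤ) ∣ (v.1 - c₀.1) + 3*(v.2 - c₀.2) := by
      have h1 : (((v.1 - c₀.1) + 3*(v.2 - c₀.2) : ℤ) : ZMod 7) = 0 := by
        unfold fw at h0
        rw [Prod.fst_sub, Prod.snd_sub] at h0
        push_cast at h0 ⊢
        linear_combination h0
      exact (ZMod.intCast_zmod_eq_zero_iff_dvd _ 7).mp h1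
    obtain ⟨a, b, ha, hb⟩ : ∃ a b : ℤ, v.1 = c₀.1 + (a + 3*b) ∧ v.2 = c₀.2 + (2*a - b) :=
      ⟨((v.1-c₀.1)+3*(v.2-c₀.2))/7, (2*(v.1-c₀.1)-(v.2-c₀.2))/7, by omega, by omega⟩
    have hch := lineB2 hS hind b (lineB1 hS hind a hB)
    have hveq : v = c₀ + (a, 2*a) + (3*b, -b) := by
      rw [Prod.ext_iff]
      constructor <;> simp [Prod.fst_add, Prod.snd_add] <;> omega
    rw [← hveq] at hch
    exact hch.1
  refine Set.Subset.antisymm ?_ hsub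
  intro s hs
  by_contra hns
  obtain ⟨u, ⟨hu, hadj⟩, -⟩ := latt_isPDS 3 (Or.inl rfl) (fw 3 c₀) s hns
  exact hind s hs u (hsub hu) hadj
end Glob

lemma cast_val7n (z : ZMod 7) : ((z.val : ℕ) : ZMod 7) = z := by
  simp [ZMod.natCast_val, ZMod.cast_id]

lemma cast_val7 (z : ZMod 7) : (((z.val : ℤ) : ZMod 7)) = z := by
  push_cast
  simp [ZMod.natCast_val, ZMod.cast_id]

lemma latt_ne_univ (k : ℤ) (c : ZMod 7) : latt k c ≠ Set.univ := by
  intro h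
  have hv : ((((c+1).val : ℤ), (0:ℤ)) : ℤ×ℤ) ∈ latt k c := h ▸ Set.mem_univ _
  have : fw k (((c+1).val : ℤ), (0:ℤ)) = c + 1 := by
    unfold fw
    simp [cast_val7]
  rw [show fw k (((c+1).val : ℤ), (0:ℤ)) = c from hv] at this
  have h10 : (1 : ZMod 7) = 0 := by
    have := this
    rwa [left_eq_add] at this
  exact absurd h10 (by decide)

lemma fw_pt (k : ℤ) (x y : ℤ) : fw k (x, y) = (x : ZMod 7) + (k : ZMod 7) * (y : ZMod 7) := rfl

lemma latt_inj (k : ℤ) {c c' : ZMod 7} (h : latt k c = latt k c') : c = c' := by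
  have hv : (((c.val : ℤ), (0:ℤ)) : ℤ×ℤ) ∈ latt k c := by
    show fw k _ = c
    rw [fw_pt]
    simp [cast_val7]
  rw [h] at hv
  have : fw k (((c.val : ℤ), (0:ℤ))) = c := by rw [fw_pt]; simp [cast_val7]
  rw [show fw k (((c.val : ℤ), (0:ℤ))) = c' from hv] at this
  exact this.symm

lemma latt_cross {c c' : ZMod 7} : latt 3 c ≠ latt 5 c' := by
  intro h
  have hx : (((c.val : ℤ) - 3, (1:ℤ)) : ℤ×ℤ) ∈ latt 3 c := by
    show fw 3 _ = c
    rw [fw_pt]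
    push_cast
    rw [show ((c.val : ℕ) : ZMod 7) = c from cast_val7n c]
    ring
  have hy : (((c.val : ℤ) - 6, (2:ℤ)) : ℤ×ℤ) ∈ latt 3 c := by
    show fw 3 _ = c
    rw [fw_pt]
    push_cast
    rw [show ((c.val : ℕ) : ZMod 7) = c from cast_val7n c]
    ring
  rw [h] at hx hy
  have hx' : c + 2 = c' := by
    have : fw 5 (((c.val : ℤ) - 3, (1:ℤ))) = c + 2 := by
      rw [fw_pt]; push_cast
      rw [show ((c.val : ℕ) : ZMod 7) = c from cast_val7n c]; ring
    rw [show fw 5 (((c.val : ℤ) - 3, (1:ℤ))) = c' from hx] at this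
    exact this.symm
  have hy' : c + 4 = c' := by
    have : fw 5 (((c.val : ℤ) - 6, (2:ℤ))) = c + 4 := by
      rw [fw_pt]; push_cast
      rw [show ((c.val : ℕ) : ZMod 7) = c from cast_val7n c]; ring
    rw [show fw 5 (((c.val : ℤ) - 6, (2:ℤ))) = c' from hy] at this
    exact this.symm
  have : (2 : ZMod 7) = 4 := by
    have := hx'.trans hy'.symm
    exact add_left_cancel this
  exact absurd this (by decide)

theorem PDS_classify {S : Set (ℤ × ℤ)} :
    (IsPDS triLattice S ∧ S ≠ Set.univ) ↔ ((∃ c, S = latt 3 c) ∨ (∃ c, S = latt 5 c)) := by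
  constructor
  · rintro ⟨hS, hne⟩
    have hind := no_edge hS hne
    have hex : ∃ c₀, c₀ ∈ S := by
      by_cases h : ((0,0) : ℤ×ℤ) ∈ S
      · exact ⟨_, h⟩
      · obtain ⟨u, ⟨hu, -⟩, -⟩ := hS _ h
        exact ⟨u, hu⟩
    obtain ⟨c₀, hc₀⟩ := hex
    rcases local_struct hS hind hc₀ with h | h
    · exact Or.inr ⟨fw 5 c₀, globA hS hind h⟩
    · exact Or.inl ⟨fw 3 c₀, globB hS hind h⟩
  · rintro (⟨c, rfl⟩ | ⟨c, rfl⟩)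
    · exact ⟨latt_isPDS 3 (Or.inl rfl) c, latt_ne_univ 3 c⟩
    · exact ⟨latt_isPDS 5 (Or.inr rfl) c, latt_ne_univ 5 c⟩

/-- The triangular lattice has exactly 14 proper perfect dominating sets. -/
theorem fourteen_proper_PDSs :
    {S : Set (ℤ × ℤ) | IsPDS triLattice S ∧ S ≠ Set.univ}.ncard = 14 := by
  have hset : {S : Set (ℤ × ℤ) | IsPDS triLattice S ∧ S ≠ Set.univ}
      = Set.range (latt 3) ∪ Set.range (latt 5) := by
    ext S
    simp only [Set.mem_setOf_eq, PDS_classify, Set.mem_union, Set.mem_range]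
    constructor
    · rintro (⟨c, rfl⟩ | ⟨c, rfl⟩)
      · exact Or.inl ⟨c, rfl⟩
      · exact Or.inr ⟨c, rfl⟩
    · rintro (⟨c, rfl⟩ | ⟨c, rfl⟩)
      · exact Or.inl ⟨c, rfl⟩
      · exact Or.inr ⟨c, rfl⟩
  rw [hset]
  have hdisj : Disjoint (Set.range (latt 3)) (Set.range (latt 5)) := by
    rw [Set.disjoint_left]
    rintro A ⟨c, rfl⟩ ⟨c', hc'⟩
    exact latt_cross hc'.symm
  rw [Set.ncard_union_eq hdisj (Set.finite_range _) (Set.finite_range _)]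
  have h3 : (Set.range (latt 3)).ncard = 7 := by
    rw [← Set.image_univ, Set.ncard_image_of_injective _ (fun a b h => latt_inj 3 h),
      Set.ncard_univ]
    simp [Nat.card_eq_fintype_card]
  have h5 : (Set.range (latt 5)).ncard = 7 := by
    rw [← Set.image_univ, Set.ncard_image_of_injective _ (fun a b h => latt_inj 5 h),
      Set.ncard_univ]
    simp [Nat.card_eq_fintype_card]
  rw [h3, h5]
end

section
/- For all integers k, ℓ ≥ 1, the toroidal triangular lattice Δ_{10k,10ℓ} contains a parallel K₂-quasiperfect dominating set having exactly 10kℓ components (hence of cardinality 20kℓ). -/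
open SimpleGraph Set

/-- Representative directions for the three types of `K₂`-components:
type 1 is `±(0,1)`, type 2 is `±(1,0)`, type 3 is `±(1,-1)`. -/
def typeDirs : Set (ℤ × ℤ) := {(0,1), (1,0), (1,-1)}

/-- A `K₂`-QPDS of the toroidal lattice is parallel when all its components
have the same type. -/
def TorIsParallel (m n : ℕ) (S : Set (ZMod m × ZMod n)) : Prop :=
  ∃ d ∈ typeDirs, ∀ a ∈ S, ∀ b ∈ S, (torLattice m n).Adj a b →
    (b - a = ((d.1 : ZMod m), (d.2 : ZMod n)) ∨
     b - a = -((d.1 : ZMod m), (d.2 : ZMod n)))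

namespace TorAux

open SimpleGraph Set

def dirL : Finset (ℤ × ℤ) := {(1,0), (-1,0), (0,1), (0,-1), (1,-1), (-1,1)}

def gg (d : ℤ × ℤ) : ZMod 10 := (d.1 : ZMod 10) + 4 * (d.2 : ZMod 10)

def qpred (s : ZMod 10) (d : ℤ × ℤ) : Prop := s + gg d = 0 ∨ s + gg d = 1

instance {s : ZMod 10} : DecidablePred (qpred s) := fun d => by unfold qpred; infer_instance

lemma count1 : ∀ s : ZMod 10, (s = 0 ∨ s = 1) → (dirL.filter (qpred s)).card = 1 := by decide

lemma count2 : ∀ s : ZMod 10, ¬(s = 0 ∨ s = 1) →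
    (dirL.filter (qpred s)).card = 1 ∨ (dirL.filter (qpred s)).card = 2 := by decide

lemma par : ∀ s : ZMod 10, ∀ d ∈ dirL, (s = 0 ∨ s = 1) → qpred s d →
    d = (1,0) ∨ d = (-1,0) := by decide

lemma triDirs_eq : triDirs = ↑dirL := by
  ext d; simp [triDirs, dirL]

lemma neg_mem_dirL : ∀ d ∈ dirL, -d ∈ dirL := by decide

lemma mem_dirL_bound : ∀ d ∈ dirL, d.1.natAbs ≤ 1 ∧ d.2.natAbs ≤ 1 := by decide

variable {m n : ℕ}

def cmap (m n : ℕ) (d : ℤ × ℤ) : ZMod m × ZMod n := ((d.1 : ZMod m), (d.2 : ZMod n))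

lemma cmap_neg (d : ℤ × ℤ) : cmap m n (-d) = - cmap m n d := by
  simp [cmap, Prod.ext_iff]

lemma intCast_injOn (hm : 10 ≤ m) {x y : ℤ} (hx : x.natAbs ≤ 1) (hy : y.natAbs ≤ 1)
    (h : (x : ZMod m) = (y : ZMod m)) : x = y := by
  have h0 : ((x - y : ℤ) : ZMod m) = 0 := by push_cast; rw [h]; ring
  rw [ZMod.intCast_zmod_eq_zero_iff_dvd] at h0
  have hlt : (x - y).natAbs < (m : ℤ).natAbs := by
    rw [Int.natAbs_natCast]; omega
  have := Int.eq_zero_of_dvd_of_natAbs_lt_natAbs h0 hlt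
  omega

lemma cmap_injOn (hm : 10 ≤ m) (hn : 10 ≤ n) :
    Set.InjOn (cmap m n) ↑dirL := by
  intro d hd d' hd' h
  obtain ⟨h1, h2⟩ := mem_dirL_bound d hd
  obtain ⟨h1', h2'⟩ := mem_dirL_bound d' hd'
  have e1 := intCast_injOn hm h1 h1' (congrArg Prod.fst h)
  have e2 := intCast_injOn hn h2 h2' (congrArg Prod.snd h)
  exact Prod.ext e1 e2

lemma cmap_ne_zero (hm : 10 ≤ m) (hn : 10 ≤ n) {d : ℤ × ℤ} (hd : d ∈ dirL) :
    cmap m n d ≠ 0 := by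
  intro h
  have h1 := mem_dirL_bound d hd
  have e1 : d.1 = 0 := intCast_injOn hm h1.1 (by norm_num)
    (by simpa [cmap] using congrArg Prod.fst h)
  have e2 : d.2 = 0 := intCast_injOn hn h1.2 (by norm_num)
    (by simpa [cmap] using congrArg Prod.snd h)
  have : d = (0, 0) := Prod.ext e1 e2
  subst this
  revert hd; decide

lemma adj_iff (hm : 10 ≤ m) (hn : 10 ≤ n) (u v : ZMod m × ZMod n) :
    (torLattice m n).Adj u v ↔ u ≠ v ∧ ∃ d ∈ dirL, v = u + cmap m n d := by
  simp only [torLattice, fromRel_adj]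
  constructor
  · rintro ⟨hne, h | h⟩
    · obtain ⟨d, hd, he⟩ := h
      rw [triDirs_eq] at hd
      refine ⟨hne, -d, neg_mem_dirL d hd, ?_⟩
      rw [cmap_neg]
      have : u - v = cmap m n d := he
      rw [← this]; abel
    · obtain ⟨d, hd, he⟩ := h
      rw [triDirs_eq] at hd
      refine ⟨hne, d, hd, ?_⟩
      have : v - u = cmap m n d := he
      rw [← this]; abel
  · rintro ⟨hne, d, hd, rfl⟩
    refine ⟨hne, Or.inr ⟨d, ?_, ?_⟩⟩
    · rw [triDirs_eq]; exact hd
    · show u + cmap m n d - u = cmap m n d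
      abel

def Fm (hm : 10 ∣ m) (hn : 10 ∣ n) : (ZMod m × ZMod n) →+ ZMod 10 where
  toFun v := ZMod.castHom hm (ZMod 10) v.1 + 4 * ZMod.castHom hn (ZMod 10) v.2
  map_zero' := by simp
  map_add' u v := by simp [map_add]; ring

lemma Fm_cmap (hm : 10 ∣ m) (hn : 10 ∣ n) (d : ℤ × ℤ) :
    Fm hm hn (cmap m n d) = gg d := by
  show ZMod.castHom hm (ZMod 10) ((d.1 : ℤ) : ZMod m)
      + 4 * ZMod.castHom hn (ZMod 10) ((d.2 : ℤ) : ZMod n) = gg d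
  rw [map_intCast, map_intCast]
  rfl

lemma Fm_surj (hm : 10 ∣ m) (hn : 10 ∣ n) : Function.Surjective (Fm hm hn) := by
  intro t
  refine ⟨((t.val : ZMod m), 0), ?_⟩
  have h1 : ((t.val : ℕ) : ZMod 10) = t := ZMod.natCast_rightInverse t
  show ZMod.castHom hm (ZMod 10) ((t.val : ℕ) : ZMod m)
      + 4 * ZMod.castHom hn (ZMod 10) (0 : ZMod n) = t
  rw [map_natCast, map_zero, h1]
  ring

lemma fiber_card (hm : 10 ∣ m) (hn : 10 ∣ n) (t : ZMod 10) :
    10 * Nat.card ((Fm hm hn) ⁻¹' {t} : Set (ZMod m × ZMod n)) = m * n := by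
  obtain ⟨x0, hx0⟩ := Fm_surj hm hn t
  have e : ((Fm hm hn) ⁻¹' {t} : Set (ZMod m × ZMod n)) ≃ (Fm hm hn).ker := by
    refine ⟨fun u => ⟨u.1 - x0, ?_⟩, fun w => ⟨w.1 + x0, ?_⟩, ?_, ?_⟩
    · rw [AddMonoidHom.mem_ker, map_sub, hx0]
      have : Fm hm hn u.1 = t := u.2
      rw [this, sub_self]
    · have : Fm hm hn w.1 = 0 := w.2
      show Fm hm hn (w.1 + x0) ∈ ({t} : Set (ZMod 10))
      simp [map_add, this, hx0]
    · intro u; ext : 1; simp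
    · intro w; ext : 1; simp
  rw [Nat.card_congr e]
  have hq := AddSubgroup.card_eq_card_quotient_mul_card_addSubgroup (Fm hm hn).ker
  have hquot : Nat.card ((ZMod m × ZMod n) ⧸ (Fm hm hn).ker) = 10 := by
    rw [Nat.card_congr (QuotientAddGroup.quotientKerEquivOfSurjective _ (Fm_surj hm hn)).toEquiv]
    simp [Nat.card_zmod]
  rw [hquot] at hq
  rw [← hq, Nat.card_prod, Nat.card_zmod, Nat.card_zmod]

def Sset (hm : 10 ∣ m) (hn : 10 ∣ n) : Set (ZMod m × ZMod n) :=
  {w | Fm hm hn w = 0 ∨ Fm hm hn w = 1}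

lemma nbr_eq (hm : 10 ∣ m) (hn : 10 ∣ n) (hm10 : 10 ≤ m) (hn10 : 10 ≤ n)
    (v : ZMod m × ZMod n) :
    {u | u ∈ Sset hm hn ∧
        (torLattice m n).Adj v u}
      = (fun d => v + cmap m n d) '' {d : ℤ × ℤ | d ∈ dirL ∧ qpred (Fm hm hn v) d} := by
  ext u
  simp only [Set.mem_setOf_eq, Set.mem_image]
  constructor
  · rintro ⟨hu, hadj⟩
    rw [adj_iff hm10 hn10] at hadj
    obtain ⟨hne, d, hd, rfl⟩ := hadj
    refine ⟨d, ⟨hd, ?_⟩, rfl⟩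
    have hF : Fm hm hn (v + cmap m n d) = Fm hm hn v + gg d := by
      rw [map_add, Fm_cmap]
    unfold qpred
    rw [← hF]; exact hu
  · rintro ⟨d, ⟨hd, hq⟩, rfl⟩
    have hF : Fm hm hn (v + cmap m n d) = Fm hm hn v + gg d := by
      rw [map_add, Fm_cmap]
    refine ⟨show Fm hm hn (v + cmap m n d) = 0 ∨ Fm hm hn (v + cmap m n d) = 1 by
      rw [hF]; exact hq, ?_⟩
    rw [adj_iff hm10 hn10]
    refine ⟨?_, d, hd, rfl⟩
    intro h
    exact cmap_ne_zero hm10 hn10 hd (by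
      have := h.symm
      rwa [left_eq_add] at h)

lemma nbr_card (hm : 10 ∣ m) (hn : 10 ∣ n) (hm10 : 10 ≤ m) (hn10 : 10 ≤ n)
    (v : ZMod m × ZMod n) :
    {u | u ∈ Sset hm hn ∧
        (torLattice m n).Adj v u}.ncard
      = (dirL.filter (qpred (Fm hm hn v))).card := by
  rw [nbr_eq hm hn hm10 hn10 v]
  rw [Set.ncard_image_of_injOn]
  · have hset : {d : ℤ × ℤ | d ∈ dirL ∧ qpred (Fm hm hn v) d}
        = ↑(dirL.filter (qpred (Fm hm hn v))) := by
      ext d; simp [Finset.mem_filter]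
    rw [hset, Set.ncard_coe_finset]
  · intro d hd d' hd' h
    exact cmap_injOn hm10 hn10 hd.1 hd'.1 (by simpa using h)

lemma walk_partner {V : Type*} (G : SimpleGraph V) (S : Set V) (p : V → V)
    (hp : ∀ x ∈ S, ∀ u ∈ S, G.Adj x u → u = p x)
    (hpp : ∀ x ∈ S, p (p x) = x) :
    ∀ (x y : S), ((G.induce S).Walk x y) → (y : V) = x ∨ (y : V) = p x := by
  intro x y w
  induction w with
  | nil => exact Or.inl rfl
  | @cons a b c h w ih =>
    have hb : (b : V) = p a := hp a a.2 b b.2 h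
    rcases ih with h1 | h1
    · right; rw [h1, hb]
    · left; rw [h1, hb, hpp a a.2]

def pfun (hm : 10 ∣ m) (hn : 10 ∣ n) (x : ZMod m × ZMod n) : ZMod m × ZMod n :=
  if Fm hm hn x = 0 then x + cmap m n (1,0) else x - cmap m n (1,0)

lemma pfun_spec (hm : 10 ∣ m) (hn : 10 ∣ n) (hm10 : 10 ≤ m) (hn10 : 10 ≤ n) :
    ∀ x ∈ Sset hm hn,
      pfun hm hn x ∈ Sset hm hn ∧ (torLattice m n).Adj x (pfun hm hn x) := by
  intro x hx
  by_cases h0 : Fm hm hn x = 0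
  · rw [pfun, if_pos h0]
    constructor
    · exact Or.inr (by rw [map_add, Fm_cmap, h0, zero_add]; rfl)
    · rw [adj_iff hm10 hn10]
      refine ⟨?_, (1,0), ?_, rfl⟩
      · intro h
        exact cmap_ne_zero hm10 hn10 (show ((1,0) : ℤ × ℤ) ∈ dirL by decide)
          (by rwa [left_eq_add] at h)
      · decide
  · have h1 : Fm hm hn x = 1 := (hx : _ ∨ _).resolve_left h0
    rw [pfun, if_neg h0]
    have hxe : x - cmap m n (1,0) = x + cmap m n (-1,0) := by
      rw [show ((-1,0) : ℤ × ℤ) = -(1,0) by norm_num [Prod.ext_iff], cmap_neg,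
        sub_eq_add_neg]
    rw [hxe]
    constructor
    · exact Or.inl (by rw [map_add, Fm_cmap, h1]; decide)
    · rw [adj_iff hm10 hn10]
      refine ⟨?_, (-1,0), ?_, rfl⟩
      · intro h
        exact cmap_ne_zero hm10 hn10 (show ((-1,0) : ℤ × ℤ) ∈ dirL by decide)
          (by rwa [left_eq_add] at h)
      · decide

lemma pfun_uniq (hm : 10 ∣ m) (hn : 10 ∣ n) (hm10 : 10 ≤ m) (hn10 : 10 ≤ n) :
    ∀ x ∈ Sset hm hn, ∀ u ∈ Sset hm hn,
      (torLattice m n).Adj x u → u = pfun hm hn x := by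
  intro x hx u hu hadj
  have h1 : {u | u ∈ Sset hm hn ∧ (torLattice m n).Adj x u}.ncard = 1 := by
    rw [nbr_card hm hn hm10 hn10 x]
    exact count1 _ hx
  obtain ⟨a, ha⟩ := Set.ncard_eq_one.mp h1
  have hsp := pfun_spec hm hn hm10 hn10 x hx
  have hpa : pfun hm hn x ∈ {u | u ∈ Sset hm hn ∧ (torLattice m n).Adj x u} :=
    ⟨hsp.1, hsp.2⟩
  have hua : u ∈ {u | u ∈ Sset hm hn ∧ (torLattice m n).Adj x u} := ⟨hu, hadj⟩
  rw [ha, Set.mem_singleton_iff] at hpa hua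
  rw [hua, hpa]

lemma pfun_invol (hm : 10 ∣ m) (hn : 10 ∣ n) :
    ∀ x ∈ Sset hm hn, pfun hm hn (pfun hm hn x) = x := by
  intro x hx
  by_cases h0 : Fm hm hn x = 0
  · have e1 : pfun hm hn x = x + cmap m n (1,0) := by rw [pfun, if_pos h0]
    have hF1 : Fm hm hn (pfun hm hn x) = 1 := by
      rw [e1, map_add, Fm_cmap, h0, zero_add]; rfl
    have e2 : pfun hm hn (pfun hm hn x) = pfun hm hn x - cmap m n (1,0) := by
      rw [pfun, if_neg (by rw [hF1]; decide)]
    rw [e2, e1, add_sub_cancel_right]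
  · have h1 : Fm hm hn x = 1 := (hx : _ ∨ _).resolve_left h0
    have e1 : pfun hm hn x = x - cmap m n (1,0) := by rw [pfun, if_neg h0]
    have hF0 : Fm hm hn (pfun hm hn x) = 0 := by
      rw [e1, map_sub, Fm_cmap, h1]; decide
    have e2 : pfun hm hn (pfun hm hn x) = pfun hm hn x + cmap m n (1,0) := by
      rw [pfun, if_pos hF0]
    rw [e2, e1, sub_add_cancel]

lemma comp_card (hm : 10 ∣ m) (hn : 10 ∣ n) (hm10 : 10 ≤ m) (hn10 : 10 ≤ n) :
    Nat.card ((torLattice m n).induce (Sset hm hn)).ConnectedComponent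
      = Nat.card ((Fm hm hn) ⁻¹' {0} : Set (ZMod m × ZMod n)) := by
  refine (Nat.card_eq_of_bijective
    (fun v : ((Fm hm hn) ⁻¹' {0} : Set (ZMod m × ZMod n)) =>
      ((torLattice m n).induce (Sset hm hn)).connectedComponentMk
        ⟨v.1, Or.inl v.2⟩) ⟨?_, ?_⟩).symm
  · intro v w h
    rw [SimpleGraph.ConnectedComponent.eq] at h
    obtain ⟨wk⟩ := h
    rcases walk_partner (torLattice m n) (Sset hm hn) (pfun hm hn)
        (pfun_uniq hm hn hm10 hn10) (pfun_invol hm hn) _ _ wk with h1 | h1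
    · exact Subtype.ext h1.symm
    · exfalso
      have hv0 : Fm hm hn v.1 = 0 := v.2
      have hd : pfun hm hn v.1 = v.1 + cmap m n (1,0) := if_pos hv0
      have hF1 : Fm hm hn (pfun hm hn v.1) = 1 := by
        rw [hd, map_add, Fm_cmap, hv0, zero_add]; rfl
      have hw0 : Fm hm hn w.1 = 0 := w.2
      rw [h1, hF1] at hw0
      exact absurd hw0 (by decide)
  · intro C
    obtain ⟨x, hx⟩ := C.exists_rep
    rcases (x.2 : _ ∨ _) with h0 | h1
    · refine ⟨⟨x.1, h0⟩, ?_⟩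
      rw [← hx]
      exact congrArg _ (Subtype.ext rfl)
    · have hsp := pfun_spec hm hn hm10 hn10 x.1 x.2
      have hne0 : ¬ Fm hm hn x.1 = 0 := by rw [h1]; decide
      have hdef : pfun hm hn x.1 = x.1 - cmap m n (1,0) := if_neg hne0
      have hF0 : Fm hm hn (pfun hm hn x.1) = 0 := by
        rw [hdef, map_sub, Fm_cmap, h1]; decide
      refine ⟨⟨pfun hm hn x.1, hF0⟩, ?_⟩
      rw [← hx]
      exact SimpleGraph.ConnectedComponent.sound
        (SimpleGraph.Adj.reachable (by exact hsp.2.symm))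

end TorAux

/-- For all `k, ℓ ≥ 1`, the toroidal triangular lattice `Δ_{10k,10ℓ}` contains a
parallel `K₂`-QPDS with exactly `10kℓ` components, hence of cardinality `20kℓ`. -/
theorem toroidal_parallel_K2_QPDS (k l : ℕ) (hk : 1 ≤ k) (hl : 1 ≤ l) :
    ∃ S : Set (ZMod (10 * k) × ZMod (10 * l)),
      IsK2QPDS (torLattice (10 * k) (10 * l)) S ∧
      TorIsParallel (10 * k) (10 * l) S ∧
      Nat.card ((torLattice (10 * k) (10 * l)).induce S).ConnectedComponent
        = 10 * k * l ∧
      S.ncard = 20 * k * l := by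
  have hm : (10 : ℕ) ∣ 10 * k := ⟨k, rfl⟩
  have hn : (10 : ℕ) ∣ 10 * l := ⟨l, rfl⟩
  have hm10 : 10 ≤ 10 * k := by omega
  have hn10 : 10 ≤ 10 * l := by omega
  haveI : NeZero (10 * k) := ⟨by omega⟩
  haveI : NeZero (10 * l) := ⟨by omega⟩
  have hfib : ∀ t : ZMod 10,
      Nat.card ((TorAux.Fm hm hn) ⁻¹' {t} : Set (ZMod (10 * k) × ZMod (10 * l)))
        = 10 * (k * l) := by
    intro t
    have h10 := TorAux.fiber_card hm hn t
    have h2 : (10 * k) * (10 * l) = 10 * (10 * (k * l)) := by ring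
    omega
  refine ⟨TorAux.Sset hm hn, ⟨?_, ?_⟩, ?_, ?_, ?_⟩
  · intro v hv
    rw [TorAux.nbr_card hm hn hm10 hn10 v]
    exact TorAux.count2 _ hv
  · intro v hv
    rw [TorAux.nbr_card hm hn hm10 hn10 v]
    exact TorAux.count1 _ hv
  · refine ⟨(1,0), by simp [typeDirs], ?_⟩
    intro a ha b hb hadj
    rw [TorAux.adj_iff hm10 hn10] at hadj
    obtain ⟨hne, d, hd, rfl⟩ := hadj
    have hq : TorAux.qpred (TorAux.Fm hm hn a) d := by
      have hFb : TorAux.Fm hm hn (a + TorAux.cmap (10 * k) (10 * l) d)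
          = TorAux.Fm hm hn a + TorAux.gg d := by rw [map_add, TorAux.Fm_cmap]
      unfold TorAux.qpred
      rw [← hFb]
      exact hb
    rcases TorAux.par _ d hd ha hq with h | h <;> subst h
    · left
      show a + TorAux.cmap (10 * k) (10 * l) (1,0) - a = _
      rw [add_sub_cancel_left]
      rfl
    · right
      show a + TorAux.cmap (10 * k) (10 * l) (-1,0) - a = _
      rw [add_sub_cancel_left,
        show ((-1,0) : ℤ × ℤ) = -(1,0) by norm_num [Prod.ext_iff], TorAux.cmap_neg]
      rfl
  · rw [TorAux.comp_card hm hn hm10 hn10, hfib 0]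
    ring
  · have hunion : TorAux.Sset hm hn
        = (TorAux.Fm hm hn) ⁻¹' {0} ∪ (TorAux.Fm hm hn) ⁻¹' {1} := by
      ext w
      simp [TorAux.Sset]
    rw [hunion, Set.ncard_union_eq ?_ (Set.toFinite _) (Set.toFinite _)]
    · rw [← Nat.card_coe_set_eq, ← Nat.card_coe_set_eq, hfib 0, hfib 1]
      ring
    · rw [Set.disjoint_left]
      intro w h0 h1
      have e0 : TorAux.Fm hm hn w = 0 := h0
      have e1 : TorAux.Fm hm hn w = 1 := h1
      rw [e0] at e1
      exact absurd e1 (by decide)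
end
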